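/- Let N ∈ ℕ with N ≥ 3, and let ξ₁, …, ξ_N be independent identically distributed random variables with values in {−1, 0, 1}, each with P(ξ_j = 1) = P(ξ_j = −1) = 1/N and P(ξ_j = 0) = 1 − 2/N. Let S⁺ = #{j : ξ_j = 1} and S⁻ = #{j : ξ_j = −1}. Then P(S⁺ = S⁻) > 0, E[(S⁺)² | S⁺ = S⁻] ≤ (1 − 2/N)^{−2}, and E[S⁺ | S⁺ = S⁻] ≤ (1 − 2/N)^{−1}. -/

import Mathlib

open MeasureTheory ProbabilityTheory
open scoped ENNReal


open MeasureTheory ProbabilityTheory Finset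
open scoped ENNReal

namespace SchemeJumpAux

variable {N : ℕ}

def Ap (ω : Fin N → ℤ) : Finset (Fin N) := Finset.univ.filter (fun j => ω j = 1)
def Bm (ω : Fin N → ℤ) : Finset (Fin N) := Finset.univ.filter (fun j => ω j = -1)
def Zz (ω : Fin N → ℤ) : Finset (Fin N) := Finset.univ.filter (fun j => ω j = 0)

def Tfin (N : ℕ) : Finset (Fin N → ℤ) := Fintype.piFinset fun _ => ({1, -1, 0} : Finset ℤ)

def Ffin (N : ℕ) : Finset (Fin N → ℤ) := (Tfin N).filter fun ω => (Ap ω).card = (Bm ω).card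

lemma mem_Ap {ω : Fin N → ℤ} {i : Fin N} : i ∈ Ap ω ↔ ω i = 1 := by simp [Ap]
lemma mem_Bm {ω : Fin N → ℤ} {i : Fin N} : i ∈ Bm ω ↔ ω i = -1 := by simp [Bm]
lemma mem_Zz {ω : Fin N → ℤ} {i : Fin N} : i ∈ Zz ω ↔ ω i = 0 := by simp [Zz]
lemma mem_Tfin {ω : Fin N → ℤ} : ω ∈ Tfin N ↔ ∀ i, ω i = 1 ∨ ω i = -1 ∨ ω i = 0 := by
  simp [Tfin, Fintype.mem_piFinset]

lemma Ap_zero_out {ω : Fin N → ℤ} {i j : Fin N} (hi : ω i = 1) (hj : ω j = -1) :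
    Ap (fun m => if m = i ∨ m = j then 0 else ω m) = (Ap ω).erase i := by
  ext m
  simp only [mem_Ap, Finset.mem_erase]
  by_cases hmi : m = i
  · subst hmi; simp
  · by_cases hmj : m = j
    · subst hmj; simp [hmi, hj]
    · simp [hmi, hmj]

lemma Bm_zero_out {ω : Fin N → ℤ} {i j : Fin N} (hi : ω i = 1) (hj : ω j = -1) :
    Bm (fun m => if m = i ∨ m = j then 0 else ω m) = (Bm ω).erase j := by
  ext m
  simp only [mem_Bm, Finset.mem_erase]
  by_cases hmj : m = j
  · subst hmj; simp
  · by_cases hmi : m = i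
    · subst hmi; simp [hmj, hi]
    · simp [hmi, hmj]

lemma Ap_restore {ω' : Fin N → ℤ} {i j : Fin N} (hi : ω' i = 0) (hj : ω' j = 0)
    (hij : i ≠ j) :
    Ap (fun m => if m = i then 1 else if m = j then -1 else ω' m) = insert i (Ap ω') := by
  ext m
  simp only [mem_Ap, Finset.mem_insert]
  by_cases hmi : m = i
  · subst hmi; simp
  · by_cases hmj : m = j
    · subst hmj; simp [hmi, hj]
    · simp [hmi, hmj]

lemma Bm_restore {ω' : Fin N → ℤ} {i j : Fin N} (hi : ω' i = 0) (hj : ω' j = 0)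
    (hij : i ≠ j) :
    Bm (fun m => if m = i then 1 else if m = j then -1 else ω' m) = insert j (Bm ω') := by
  ext m
  simp only [mem_Bm, Finset.mem_insert]
  by_cases hmi : m = i
  · subst hmi; simp [hij, hi]
  · by_cases hmj : m = j
    · subst hmj; simp [Ne.symm hij]
    · simp [hmi, hmj]

end SchemeJumpAux

namespace SchemeJumpAux

lemma prod_split {N : ℕ} (cr : ℤ → ℝ) (f : Fin N → ℤ) {i j : Fin N} (hij : i ≠ j) :
    ∏ m, cr (f m)
      = cr (f i) * (cr (f j) * ∏ m ∈ (Finset.univ.erase i).erase j, cr (f m)) := by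
  rw [← Finset.mul_prod_erase Finset.univ (fun m => cr (f m)) (Finset.mem_univ i),
    ← Finset.mul_prod_erase _ (fun m => cr (f m))
      (Finset.mem_erase.mpr ⟨Ne.symm hij, Finset.mem_univ j⟩)]

lemma core (N : ℕ) (hN : (N : ℝ) ≠ 0) (cr : ℤ → ℝ)
    (h1 : cr 1 = (N : ℝ)⁻¹) (hm : cr (-1) = (N : ℝ)⁻¹) (hq : 0 < cr 0)
    (hnn : ∀ x, 0 ≤ cr x) :
    ∑ ω ∈ Ffin N, ((Ap ω).card : ℝ) ^ 2 * ∏ i, cr (ω i)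
      ≤ (cr 0)⁻¹ ^ 2 * ∑ ω ∈ Ffin N, ∏ i, cr (ω i) := by
  classical
  have hwnn : ∀ ω : Fin N → ℤ, 0 ≤ ∏ i, cr (ω i) :=
    fun ω => Finset.prod_nonneg fun i _ => hnn _
  calc ∑ ω ∈ Ffin N, ((Ap ω).card : ℝ) ^ 2 * ∏ i, cr (ω i)
      = ∑ ω ∈ Ffin N, ∑ _p ∈ Ap ω ×ˢ Bm ω, ∏ i, cr (ω i) := by
        refine Finset.sum_congr rfl fun ω hω => ?_
        have hk : (Bm ω).card = (Ap ω).card := ((Finset.mem_filter.mp hω).2).symm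
        rw [Finset.sum_const, Finset.card_product, hk, nsmul_eq_mul]
        push_cast; ring
    _ = ∑ x ∈ (Ffin N).sigma (fun ω => Ap ω ×ˢ Bm ω), ∏ i, cr (x.1 i) := by
        rw [Finset.sum_sigma]
    _ = ∑ y ∈ (Ffin N).sigma (fun ω => (Zz ω ×ˢ Zz ω).filter fun p => p.1 ≠ p.2),
          ((N : ℝ)⁻¹ * (cr 0)⁻¹) ^ 2 * ∏ i, cr (y.1 i) := by
        refine Finset.sum_nbij'
          (i := fun x => ⟨fun m => if m = x.2.1 ∨ m = x.2.2 then 0 else x.1 m, x.2⟩)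
          (j := fun y => ⟨fun m => if m = y.2.1 then 1 else if m = y.2.2 then -1 else y.1 m,
            y.2⟩) ?_ ?_ ?_ ?_ ?_
        · rintro ⟨ω, i, j⟩ hx
          rw [Finset.mem_sigma] at hx
          obtain ⟨hωF, hp⟩ := hx
          rw [Finset.mem_product] at hp
          have hi1 : ω i = 1 := mem_Ap.mp hp.1
          have hjm : ω j = -1 := mem_Bm.mp hp.2
          have hij : i ≠ j := by intro h; rw [h, hjm] at hi1; norm_num at hi1
          obtain ⟨hωT, hωk⟩ := Finset.mem_filter.mp hωF
          refine Finset.mem_sigma.mpr ⟨Finset.mem_filter.mpr ⟨?_, ?_⟩, ?_⟩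
          · refine mem_Tfin.mpr fun m => ?_
            dsimp only
            split_ifs with h
            · right; right; rfl
            · exact mem_Tfin.mp hωT m
          · rw [Ap_zero_out hi1 hjm, Bm_zero_out hi1 hjm,
              Finset.card_erase_of_mem (mem_Ap.mpr hi1),
              Finset.card_erase_of_mem (mem_Bm.mpr hjm), hωk]
          · simp only [Finset.mem_filter, Finset.mem_product, mem_Zz]
            exact ⟨⟨by simp, by simp⟩, hij⟩
        · rintro ⟨ω', i, j⟩ hy
          rw [Finset.mem_sigma] at hy
          obtain ⟨hωF, hp⟩ := hy
          rw [Finset.mem_filter, Finset.mem_product] at hp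
          have hi0 : ω' i = 0 := mem_Zz.mp hp.1.1
          have hj0 : ω' j = 0 := mem_Zz.mp hp.1.2
          have hij : i ≠ j := hp.2
          obtain ⟨hωT, hωk⟩ := Finset.mem_filter.mp hωF
          refine Finset.mem_sigma.mpr ⟨Finset.mem_filter.mpr ⟨?_, ?_⟩, ?_⟩
          · refine mem_Tfin.mpr fun m => ?_
            dsimp only
            split_ifs with h h'
            · left; rfl
            · right; left; rfl
            · exact mem_Tfin.mp hωT m
          · rw [Ap_restore hi0 hj0 hij, Bm_restore hi0 hj0 hij,
              Finset.card_insert_of_notMem (by simp [mem_Ap, hi0]),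
              Finset.card_insert_of_notMem (by simp [mem_Bm, hj0]), hωk]
          · simp only [Finset.mem_product, mem_Ap, mem_Bm]
            constructor
            · simp
            · simp [Ne.symm hij]
        · rintro ⟨ω, i, j⟩ hx
          rw [Finset.mem_sigma, Finset.mem_product] at hx
          have hi1 : ω i = 1 := mem_Ap.mp hx.2.1
          have hjm : ω j = -1 := mem_Bm.mp hx.2.2
          have hij : i ≠ j := by intro h; rw [h, hjm] at hi1; norm_num at hi1
          have hfe : (fun m => if m = i then 1 else if m = j then (-1 : ℤ)
              else if m = i ∨ m = j then 0 else ω m) = ω := by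
            funext m
            by_cases hmi : m = i
            · subst hmi; simp [hi1]
            · by_cases hmj : m = j
              · subst hmj; simp [hmi, hjm]
              · simp [hmi, hmj]
          dsimp only
          rw [hfe]
        · rintro ⟨ω', i, j⟩ hy
          rw [Finset.mem_sigma, Finset.mem_filter, Finset.mem_product] at hy
          have hi0 : ω' i = 0 := mem_Zz.mp hy.2.1.1
          have hj0 : ω' j = 0 := mem_Zz.mp hy.2.1.2
          have hij : i ≠ j := hy.2.2
          have hfe : (fun m => if m = i ∨ m = j then 0
              else if m = i then 1 else if m = j then (-1 : ℤ) else ω' m) = ω' := by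
            funext m
            by_cases hmi : m = i
            · subst hmi; simp [hi0]
            · by_cases hmj : m = j
              · subst hmj; simp [hmi, hj0]
              · simp [hmi, hmj]
          dsimp only
          rw [hfe]
        · rintro ⟨ω, i, j⟩ hx
          rw [Finset.mem_sigma, Finset.mem_product] at hx
          have hi1 : ω i = 1 := mem_Ap.mp hx.2.1
          have hjm : ω j = -1 := mem_Bm.mp hx.2.2
          have hij : i ≠ j := by intro h; rw [h, hjm] at hi1; norm_num at hi1
          dsimp only
          rw [prod_split cr ω hij, prod_split cr _ hij]
          have hR : ∏ m ∈ (Finset.univ.erase i).erase j,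
              cr ((fun m => if m = i ∨ m = j then 0 else ω m) m)
              = ∏ m ∈ (Finset.univ.erase i).erase j, cr (ω m) := by
            refine Finset.prod_congr rfl fun m hm => ?_
            rw [Finset.mem_erase, Finset.mem_erase] at hm
            simp [hm.1, hm.2.1]
          rw [hR, hi1, hjm, h1, hm]
          simp only [if_pos (Or.inl rfl), if_pos (Or.inr rfl)]
          field_simp
          simp only [true_or, or_true, ↓reduceIte]
          ring
    _ = ∑ ω ∈ Ffin N, (((Zz ω ×ˢ Zz ω).filter fun p => p.1 ≠ p.2).card : ℝ) *
          (((N : ℝ)⁻¹ * (cr 0)⁻¹) ^ 2 * ∏ i, cr (ω i)) := by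
        rw [Finset.sum_sigma]
        refine Finset.sum_congr rfl fun ω _ => ?_
        dsimp only
        rw [Finset.sum_const, nsmul_eq_mul]
    _ ≤ ∑ ω ∈ Ffin N, ((N : ℝ) * (N : ℝ)) *
          (((N : ℝ)⁻¹ * (cr 0)⁻¹) ^ 2 * ∏ i, cr (ω i)) := by
        refine Finset.sum_le_sum fun ω _ => ?_
        refine mul_le_mul_of_nonneg_right ?_ (mul_nonneg (by positivity) (hwnn ω))
        have hzc : (Zz ω).card ≤ N := by
          simpa [Zz] using Finset.card_filter_le Finset.univ (fun j => ω j = 0)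
        have h2 : (((Zz ω ×ˢ Zz ω).filter fun p => p.1 ≠ p.2).card : ℕ) ≤ N * N := by
          calc ((Zz ω ×ˢ Zz ω).filter fun p => p.1 ≠ p.2).card
              ≤ (Zz ω ×ˢ Zz ω).card := Finset.card_filter_le _ _
            _ = (Zz ω).card * (Zz ω).card := Finset.card_product _ _
            _ ≤ N * N := Nat.mul_le_mul hzc hzc
        exact_mod_cast Nat.cast_le.mpr h2
    _ = (cr 0)⁻¹ ^ 2 * ∑ ω ∈ Ffin N, ∏ i, cr (ω i) := by
        rw [← Finset.mul_sum, ← Finset.mul_sum]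
        rw [← mul_assoc]
        congr 1
        field_simp

end SchemeJumpAux

namespace SchemeJumpAux

lemma Ffin_eq (N : ℕ) :
    Ffin N = (Tfin N).filter fun ω => (Ap ω).card = (Bm ω).card := rfl

lemma apply_sum_dirac {α : Type*} [MeasurableSpace α] [MeasurableSingletonClass α]
    (s : Finset α) (w : α → ℝ≥0∞) {A : Set α} (hA : MeasurableSet A) :
    (∑ x ∈ s, w x • Measure.dirac x) A = ∑ x ∈ s, w x * A.indicator 1 x := by
  rw [Measure.finset_sum_apply]
  exact Finset.sum_congr rfl fun x _ => by
    rw [Measure.smul_apply, Measure.dirac_apply' _ hA, smul_eq_mul]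

lemma integral_sum_dirac {α : Type*} [MeasurableSpace α] [MeasurableSingletonClass α]
    (s : Finset α) (w : α → ℝ≥0∞) (hw : ∀ x ∈ s, w x ≠ ∞) (f : α → ℝ) :
    ∫ a, f a ∂(∑ x ∈ s, w x • Measure.dirac x) = ∑ x ∈ s, (w x).toReal * f x := by
  rw [integral_finset_sum_measure ?_]
  · exact Finset.sum_congr rfl fun x _ => by
      rw [integral_smul_measure, integral_dirac, smul_eq_mul]
  · intro x hx
    exact ((integrable_const (f x)).congr (ae_eq_dirac f).symm).smul_measure (hw x hx)

end SchemeJumpAux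

open SchemeJumpAux

/-- **Moment bounds for the jump count of the approximation scheme.**
Let `N ≥ 3` and let `ξ₁, …, ξ_N` be i.i.d. with values in `{−1, 0, 1}`,
`P(ξ_j = 1) = P(ξ_j = −1) = 1/N`, `P(ξ_j = 0) = 1 − 2/N` (encoded as the product
measure `P` on `Fin N → ℤ` of the common law `ρ`).  With `S⁺ = #{j : ξ_j = 1}` and
`S⁻ = #{j : ξ_j = −1}`, the event `{S⁺ = S⁻}` has positive probability,
`E[(S⁺)² | S⁺ = S⁻] ≤ (1 − 2/N)⁻²` and `E[S⁺ | S⁺ = S⁻] ≤ (1 − 2/N)⁻¹`. -/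
theorem scheme_jump_count_bound (N : ℕ) (hN : 3 ≤ N)
    (ρ : Measure ℤ)
    (hρ : ρ = (N : ℝ≥0∞)⁻¹ • Measure.dirac 1 + (N : ℝ≥0∞)⁻¹ • Measure.dirac (-1) +
      (1 - 2 * (N : ℝ≥0∞)⁻¹) • Measure.dirac 0)
    (P : Measure (Fin N → ℤ)) (hP : P = Measure.pi fun _ => ρ)
    (Splus Sminus : (Fin N → ℤ) → ℕ)
    (hSp : ∀ ω, Splus ω = (Finset.univ.filter (fun j => ω j = 1)).card)
    (hSm : ∀ ω, Sminus ω = (Finset.univ.filter (fun j => ω j = -1)).card)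
    (D : Set (Fin N → ℤ)) (hD : D = {ω | Splus ω = Sminus ω}) :
    0 < P D ∧
      (∫ ω, ((Splus ω : ℝ)) ^ 2 ∂(P[|D])) ≤ ((1 : ℝ) - 2 / N)⁻¹ ^ 2 ∧
      (∫ ω, ((Splus ω : ℝ)) ∂(P[|D])) ≤ ((1 : ℝ) - 2 / N)⁻¹ := by
  classical
  have hN0 : N ≠ 0 := by omega
  have hNR : (3 : ℝ) ≤ (N : ℝ) := by exact_mod_cast hN
  have hNRpos : (0 : ℝ) < N := by linarith
  have hNRne : (N : ℝ) ≠ 0 := hNRpos.ne'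
  have hqpos : (0 : ℝ) < 1 - 2 / N := by
    have h1 : 2 / (N : ℝ) < 1 := by
      rw [div_lt_one hNRpos]; linarith
    linarith
  have hNe0 : (N : ℝ≥0∞) ≠ 0 := Nat.cast_ne_zero.mpr hN0
  have hNetop : (N : ℝ≥0∞) ≠ ∞ := ENNReal.natCast_ne_top N
  have h2le : 2 * (N : ℝ≥0∞)⁻¹ ≤ 1 := by
    have h2N : (2 : ℝ≥0∞) ≤ N := by exact_mod_cast (by omega : 2 ≤ N)
    calc 2 * (N : ℝ≥0∞)⁻¹ ≤ N * (N : ℝ≥0∞)⁻¹ := mul_le_mul_left h2N _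
      _ = 1 := ENNReal.mul_inv_cancel hNe0 hNetop
  set c : ℤ → ℝ≥0∞ := fun x =>
    if x = 1 then (N : ℝ≥0∞)⁻¹ else if x = -1 then (N : ℝ≥0∞)⁻¹
    else if x = 0 then 1 - 2 * (N : ℝ≥0∞)⁻¹ else 0 with hcdef
  have hc1 : c 1 = (N : ℝ≥0∞)⁻¹ := by norm_num [hcdef]
  have hcm : c (-1) = (N : ℝ≥0∞)⁻¹ := by norm_num [hcdef]
  have hc0 : c 0 = 1 - 2 * (N : ℝ≥0∞)⁻¹ := by norm_num [hcdef]
  have hρ' : ρ = ∑ x ∈ ({1, -1, 0} : Finset ℤ), c x • Measure.dirac x := by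
    rw [hρ, Finset.sum_insert (by decide), Finset.sum_insert (by decide),
      Finset.sum_singleton, hc1, hcm, hc0, add_assoc]
  have hcne : ∀ x, c x ≠ ∞ := by
    intro x
    rw [hcdef]
    dsimp only
    split_ifs
    · exact ENNReal.inv_ne_top.mpr hNe0
    · exact ENNReal.inv_ne_top.mpr hNe0
    · exact ne_top_of_le_ne_top ENNReal.one_ne_top tsub_le_self
    · exact ENNReal.zero_ne_top
  have hρuniv : ρ Set.univ = 1 := by
    rw [hρ]
    simp only [Measure.add_apply, Measure.smul_apply, measure_univ, smul_eq_mul, mul_one]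
    rw [← two_mul, add_comm, tsub_add_cancel_of_le h2le]
  haveI hρP : IsProbabilityMeasure ρ := ⟨hρuniv⟩
  haveI hPP : IsProbabilityMeasure P := by rw [hP]; infer_instance
  have hAll : ∀ s : Set (Fin N → ℤ), MeasurableSet s := fun s => s.to_countable.measurableSet
  set w : (Fin N → ℤ) → ℝ≥0∞ := fun ω => ∏ i, c (ω i) with hwdef
  have hwne : ∀ ω, w ω ≠ ∞ := by
    intro ω
    rw [hwdef]
    exact (ENNReal.prod_lt_top fun i _ => (hcne (ω i)).lt_top).ne
  have hρA : ∀ {A : Set ℤ}, MeasurableSet A →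
      ρ A = ∑ x ∈ ({1, -1, 0} : Finset ℤ), c x * A.indicator 1 x := fun hA => by
    rw [hρ', apply_sum_dirac _ _ hA]
  have hPdec : P = ∑ ω ∈ Tfin N, w ω • Measure.dirac ω := by
    rw [hP]
    refine Measure.pi_eq fun s hs => ?_
    rw [apply_sum_dirac _ _ (MeasurableSet.univ_pi hs)]
    have hind : ∀ ω : Fin N → ℤ, (Set.pi Set.univ s).indicator (1 : (Fin N → ℤ) → ℝ≥0∞) ω
        = ∏ i, (s i).indicator (1 : ℤ → ℝ≥0∞) (ω i) := by
      intro ω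
      simp only [Set.indicator_apply, Pi.one_apply]
      rw [Finset.prod_boole]
      simp [Set.mem_pi]
    calc (∑ ω ∈ Tfin N, w ω * (Set.pi Set.univ s).indicator 1 ω)
        = ∑ ω ∈ Tfin N, ∏ i, (c (ω i) * (s i).indicator 1 (ω i)) := by
          refine Finset.sum_congr rfl fun ω _ => ?_
          rw [hind, hwdef, ← Finset.prod_mul_distrib]
      _ = ∏ i, ∑ x ∈ ({1, -1, 0} : Finset ℤ), c x * (s i).indicator 1 x := by
          rw [show Tfin N = Fintype.piFinset (fun _ : Fin N => ({1, -1, 0} : Finset ℤ)) from rfl]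
          exact (Finset.prod_univ_sum (fun _ : Fin N => ({1, -1, 0} : Finset ℤ))
            (fun i x => c x * (s i).indicator 1 x)).symm
      _ = ∏ i, ρ (s i) := Finset.prod_congr rfl fun i _ => (hρA (hs i)).symm
  have hDmem : ∀ ω, ω ∈ D ↔ (Ap ω).card = (Bm ω).card := by
    intro ω
    rw [hD]
    simp only [Set.mem_setOf_eq, hSp, hSm]
    exact Iff.rfl
  have hPDsum : P D = ∑ ω ∈ Ffin N, w ω := by
    rw [hPdec, apply_sum_dirac _ _ (hAll D), Ffin_eq, Finset.sum_filter]
    refine Finset.sum_congr rfl fun ω _ => ?_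
    rw [Set.indicator_apply]
    by_cases h : ω ∈ D
    · rw [if_pos h, if_pos ((hDmem ω).mp h)]; simp
    · rw [if_neg h, if_neg (fun hc => h ((hDmem ω).mpr hc))]; simp
  -- real weights
  set crR : ℤ → ℝ := fun x => (c x).toReal with hcrdef
  set wr : (Fin N → ℤ) → ℝ := fun ω => ∏ i, crR (ω i) with hwrdef
  have hwtoReal : ∀ ω, (w ω).toReal = wr ω := fun ω => ENNReal.toReal_prod _ _
  have hcrR1 : crR 1 = (N : ℝ)⁻¹ := by
    rw [hcrdef]; dsimp only; rw [hc1, ENNReal.toReal_inv, ENNReal.toReal_natCast]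
  have hcrRm : crR (-1) = (N : ℝ)⁻¹ := by
    rw [hcrdef]; dsimp only; rw [hcm, ENNReal.toReal_inv, ENNReal.toReal_natCast]
  have hcrR0 : crR 0 = 1 - 2 / (N : ℝ) := by
    rw [hcrdef]; dsimp only
    rw [hc0, ENNReal.toReal_sub_of_le h2le ENNReal.one_ne_top, ENNReal.toReal_one,
      ENNReal.toReal_mul, ENNReal.toReal_inv, ENNReal.toReal_natCast, ENNReal.toReal_ofNat,
      div_eq_mul_inv]
  have hcrnn : ∀ x, 0 ≤ crR x := fun x => ENNReal.toReal_nonneg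
  have hwrnn : ∀ ω, 0 ≤ wr ω := fun ω => Finset.prod_nonneg fun i _ => hcrnn _
  -- positivity of P D
  have hc0ne : c 0 ≠ 0 := by
    intro h
    rw [hcrdef] at hcrR0
    dsimp only at hcrR0
    rw [h, ENNReal.toReal_zero] at hcrR0
    linarith
  have hzeromem : (fun _ : Fin N => (0 : ℤ)) ∈ Ffin N := by
    rw [Ffin_eq, Finset.mem_filter]
    refine ⟨mem_Tfin.mpr fun i => Or.inr (Or.inr rfl), ?_⟩
    simp [Ap, Bm]
  have hw0 : w (fun _ : Fin N => (0 : ℤ)) ≠ 0 := by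
    rw [hwdef]
    dsimp only
    exact Finset.prod_ne_zero_iff.mpr fun i _ => hc0ne
  have hPDpos : 0 < P D := by
    rw [hPDsum]
    refine lt_of_lt_of_le (pos_iff_ne_zero.mpr hw0)
      (Finset.single_le_sum (f := w) (fun ω _ => zero_le) hzeromem)
  have hPDne_top : P D ≠ ∞ := measure_ne_top P D
  -- integral formula
  have hint : ∀ f : (Fin N → ℤ) → ℝ,
      ∫ ω, f ω ∂(P[|D]) = (P D).toReal⁻¹ * ∑ ω ∈ Ffin N, wr ω * f ω := by
    intro f
    show ∫ ω, f ω ∂((P D)⁻¹ • P.restrict D) = _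
    rw [integral_smul_measure, ← integral_indicator (hAll D), hPdec,
      integral_sum_dirac _ _ (fun ω _ => hwne ω), ENNReal.toReal_inv, smul_eq_mul]
    congr 1
    rw [Ffin_eq, Finset.sum_filter]
    refine Finset.sum_congr rfl fun ω _ => ?_
    rw [Set.indicator_apply]
    by_cases h : ω ∈ D
    · rw [if_pos h, if_pos ((hDmem ω).mp h), hwtoReal]
    · rw [if_neg h, if_neg (fun hc => h ((hDmem ω).mpr hc))]; simp
  have hS0 : (P D).toReal = ∑ ω ∈ Ffin N, wr ω := by
    rw [hPDsum, ENNReal.toReal_sum (fun ω _ => hwne ω)]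
    exact Finset.sum_congr rfl fun ω _ => hwtoReal ω
  have hS0pos : 0 < ∑ ω ∈ Ffin N, wr ω := by
    rw [← hS0]
    exact ENNReal.toReal_pos hPDpos.ne' hPDne_top
  set S0 : ℝ := ∑ ω ∈ Ffin N, wr ω with hS0def
  -- core bound
  have hcore : ∑ ω ∈ Ffin N, wr ω * ((Ap ω).card : ℝ) ^ 2
      ≤ ((1 : ℝ) - 2 / N)⁻¹ ^ 2 * S0 := by
    have h := core N hNRne crR hcrR1 hcrRm (by rw [hcrR0]; exact hqpos) hcrnn
    rw [hcrR0] at h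
    calc ∑ ω ∈ Ffin N, wr ω * ((Ap ω).card : ℝ) ^ 2
        = ∑ ω ∈ Ffin N, ((Ap ω).card : ℝ) ^ 2 * ∏ i, crR (ω i) := by
          refine Finset.sum_congr rfl fun ω _ => ?_
          rw [hwrdef]; ring
      _ ≤ ((1 : ℝ) - 2 / N)⁻¹ ^ 2 * ∑ ω ∈ Ffin N, ∏ i, crR (ω i) := h
      _ = ((1 : ℝ) - 2 / N)⁻¹ ^ 2 * S0 := rfl
  have hSpcast : ∀ ω : Fin N → ℤ, ((Splus ω : ℝ)) = ((Ap ω).card : ℝ) := by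
    intro ω; rw [hSp]; rfl
  set S2 : ℝ := ∑ ω ∈ Ffin N, wr ω * ((Ap ω).card : ℝ) ^ 2 with hS2def
  set S1 : ℝ := ∑ ω ∈ Ffin N, wr ω * ((Ap ω).card : ℝ) with hS1def
  have hS1nn : 0 ≤ S1 :=
    Finset.sum_nonneg fun ω _ => mul_nonneg (hwrnn ω) (Nat.cast_nonneg _)
  have hq2 : S0⁻¹ * S2 ≤ ((1 : ℝ) - 2 / N)⁻¹ ^ 2 := by
    calc S0⁻¹ * S2 ≤ S0⁻¹ * (((1 : ℝ) - 2 / N)⁻¹ ^ 2 * S0) :=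
        mul_le_mul_of_nonneg_left hcore (inv_nonneg.mpr hS0pos.le)
      _ = ((1 : ℝ) - 2 / N)⁻¹ ^ 2 := by
          field_simp
  refine ⟨hPDpos, ?_, ?_⟩
  · rw [hint]
    have hconv : ∑ ω ∈ Ffin N, wr ω * ((Splus ω : ℝ)) ^ 2 = S2 :=
      Finset.sum_congr rfl fun ω _ => by rw [hSpcast]
    rw [hconv, hS0]
    exact hq2
  · rw [hint]
    have hconv : ∑ ω ∈ Ffin N, wr ω * ((Splus ω : ℝ)) = S1 :=
      Finset.sum_congr rfl fun ω _ => by rw [hSpcast]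
    rw [hconv, hS0]
    -- Cauchy-Schwarz : S1^2 ≤ S0 * S2
    have hCS : S1 ^ 2 ≤ S0 * S2 := by
      have h := Finset.sum_mul_sq_le_sq_mul_sq (Ffin N)
        (fun ω => Real.sqrt (wr ω)) (fun ω => Real.sqrt (wr ω) * ((Ap ω).card : ℝ))
      have hl : ∑ ω ∈ Ffin N, Real.sqrt (wr ω) * (Real.sqrt (wr ω) * ((Ap ω).card : ℝ))
          = S1 := Finset.sum_congr rfl fun ω _ => by
            rw [← mul_assoc, Real.mul_self_sqrt (hwrnn ω)]
      have h2 : ∑ ω ∈ Ffin N, Real.sqrt (wr ω) ^ 2 = S0 :=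
        Finset.sum_congr rfl fun ω _ => Real.sq_sqrt (hwrnn ω)
      have h3 : ∑ ω ∈ Ffin N, (Real.sqrt (wr ω) * ((Ap ω).card : ℝ)) ^ 2 = S2 :=
        Finset.sum_congr rfl fun ω _ => by
          rw [mul_pow, Real.sq_sqrt (hwrnn ω)]
      rw [hl, h2, h3] at h
      exact h
    have hS1le : S1 ≤ ((1 : ℝ) - 2 / N)⁻¹ * S0 := by
      have hsq : S1 ^ 2 ≤ (((1 : ℝ) - 2 / N)⁻¹ * S0) ^ 2 := by
        calc S1 ^ 2 ≤ S0 * S2 := hCS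
          _ ≤ S0 * (((1 : ℝ) - 2 / N)⁻¹ ^ 2 * S0) :=
              mul_le_mul_of_nonneg_left hcore hS0pos.le
          _ = (((1 : ℝ) - 2 / N)⁻¹ * S0) ^ 2 := by ring
      calc S1 = Real.sqrt (S1 ^ 2) := (Real.sqrt_sq hS1nn).symm
        _ ≤ Real.sqrt ((((1 : ℝ) - 2 / N)⁻¹ * S0) ^ 2) := Real.sqrt_le_sqrt hsq
        _ = ((1 : ℝ) - 2 / N)⁻¹ * S0 :=
            Real.sqrt_sq (mul_nonneg (inv_nonneg.mpr hqpos.le) hS0pos.le)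
    calc S0⁻¹ * S1 ≤ S0⁻¹ * (((1 : ℝ) - 2 / N)⁻¹ * S0) :=
        mul_le_mul_of_nonneg_left hS1le (inv_nonneg.mpr hS0pos.le)
      _ = ((1 : ℝ) - 2 / N)⁻¹ := by field_simp
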